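/- A bounded linear operator T : X → X on a Banach space X has finite ascent and finite descent if and only if there exist closed subspaces V and W of X with X = V ⊕ W, both T-invariant, such that the restriction of T to V is nilpotent and the restriction of T to W is an invertible operator on W. -/

import Mathlib

section Aux

variable {X : Type*} [NormedAddCommGroup X] [NormedSpace ℝ X]

lemma clm_pow_add_apply (T : X →L[ℝ] X) (m n : ℕ) (x : X) :
    (T ^ (m + n)) x = (T ^ m) ((T ^ n) x) := by
  rw [pow_add]; rfl

lemma ker_pow_stab (T : X →L[ℝ] X) {k : ℕ}
    (h : LinearMap.ker ((T ^ k : X →L[ℝ] X) : X →ₗ[ℝ] X) = LinearMap.ker ((T ^ (k + 1) : X →L[ℝ] X) : X →ₗ[ℝ] X)) :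
    ∀ m : ℕ, LinearMap.ker ((T ^ (k + m) : X →L[ℝ] X) : X →ₗ[ℝ] X) = LinearMap.ker ((T ^ k : X →L[ℝ] X) : X →ₗ[ℝ] X) := by
  intro m
  induction m with
  | zero => rfl
  | succ m ih =>
    apply le_antisymm
    · intro x hx
      rw [LinearMap.mem_ker] at hx ⊢
      have h1 : (T ^ (k + 1)) ((T ^ m) x) = 0 := by
        rw [← clm_pow_add_apply]
        rw [show k + 1 + m = k + (m + 1) by omega]
        exact hx
      have h2 : (T ^ m) x ∈ LinearMap.ker ((T ^ k : X →L[ℝ] X) : X →ₗ[ℝ] X) := by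
        rw [h, LinearMap.mem_ker]; exact h1
      have h3 : x ∈ LinearMap.ker ((T ^ (k + m) : X →L[ℝ] X) : X →ₗ[ℝ] X) := by
        rw [LinearMap.mem_ker, ContinuousLinearMap.coe_coe, clm_pow_add_apply]
        exact h2
      rw [ih, LinearMap.mem_ker] at h3
      exact h3
    · intro x hx
      rw [LinearMap.mem_ker] at hx ⊢
      simp only [ContinuousLinearMap.coe_coe] at hx ⊢
      rw [show k + (m + 1) = (m + 1) + k by omega, clm_pow_add_apply, hx, map_zero]

lemma range_pow_stab (T : X →L[ℝ] X) {k : ℕ}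
    (h : LinearMap.range ((T ^ k : X →L[ℝ] X) : X →ₗ[ℝ] X) = LinearMap.range ((T ^ (k + 1) : X →L[ℝ] X) : X →ₗ[ℝ] X)) :
    ∀ m : ℕ, LinearMap.range ((T ^ (k + m) : X →L[ℝ] X) : X →ₗ[ℝ] X) = LinearMap.range ((T ^ k : X →L[ℝ] X) : X →ₗ[ℝ] X) := by
  intro m
  induction m with
  | zero => rfl
  | succ m ih =>
    apply le_antisymm
    · rintro _ ⟨x, rfl⟩
      exact ⟨(T ^ (m + 1)) x, (clm_pow_add_apply T k (m + 1) x).symm⟩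
    · rintro _ ⟨z, rfl⟩
      have h1 : (T ^ k) z ∈ LinearMap.range ((T ^ (k + m) : X →L[ℝ] X) : X →ₗ[ℝ] X) := by
        rw [ih]; exact ⟨z, rfl⟩
      obtain ⟨u, hu⟩ := h1
      have h2 : (T ^ k) u ∈ LinearMap.range ((T ^ (k + 1) : X →L[ℝ] X) : X →ₗ[ℝ] X) := by
        rw [← h]; exact ⟨u, rfl⟩
      obtain ⟨v, hv⟩ := h2
      refine ⟨v, ?_⟩
      simp only [ContinuousLinearMap.coe_coe] at hu hv ⊢
      rw [show k + (m + 1) = m + (k + 1) from by omega, clm_pow_add_apply, hv,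
        ← clm_pow_add_apply, show m + k = k + m from by omega, hu]

end Aux

/-- A bounded operator on a Banach space has finite ascent and finite descent iff it has a
reducing pair `(V, W)` of closed invariant subspaces on which `T` is respectively nilpotent
and invertible (i.e. bijective, hence invertible by the open mapping theorem). -/
theorem finite_ascent_descent_iff_reducing_pair {X : Type*} [NormedAddCommGroup X]
    [NormedSpace ℝ X] [CompleteSpace X] (T : X →L[ℝ] X) :
    ((∃ k : ℕ, LinearMap.ker ((T ^ k : X →L[ℝ] X) : X →ₗ[ℝ] X) =
        LinearMap.ker ((T ^ (k + 1) : X →L[ℝ] X) : X →ₗ[ℝ] X)) ∧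
      (∃ k : ℕ, LinearMap.range ((T ^ k : X →L[ℝ] X) : X →ₗ[ℝ] X) =
        LinearMap.range ((T ^ (k + 1) : X →L[ℝ] X) : X →ₗ[ℝ] X))) ↔
    ∃ V W : Submodule ℝ X, IsClosed (V : Set X) ∧ IsClosed (W : Set X) ∧ IsCompl V W ∧
      (∀ x ∈ V, T x ∈ V) ∧ (∀ x ∈ W, T x ∈ W) ∧
      (∃ n : ℕ, ∀ x ∈ V, (T ^ n) x = 0) ∧
      Set.BijOn T (W : Set X) (W : Set X) := by
  constructor
  · rintro ⟨⟨a, ha⟩, ⟨d, hd⟩⟩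
    have hker := ker_pow_stab T ha
    have hran := range_pow_stab T hd
    set p : ℕ := a + d + 1 with hp
    -- stabilized kernel and range facts
    have kstab : ∀ m : ℕ, a ≤ m → LinearMap.ker ((T ^ m : X →L[ℝ] X) : X →ₗ[ℝ] X) = LinearMap.ker ((T ^ a : X →L[ℝ] X) : X →ₗ[ℝ] X) := by
      intro m hm
      have := hker (m - a)
      rwa [show a + (m - a) = m by omega] at this
    have rstab : ∀ m : ℕ, d ≤ m → LinearMap.range ((T ^ m : X →L[ℝ] X) : X →ₗ[ℝ] X) = LinearMap.range ((T ^ d : X →L[ℝ] X) : X →ₗ[ℝ] X) := by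
      intro m hm
      have := hran (m - d)
      rwa [show d + (m - d) = m by omega] at this
    have e1 : LinearMap.ker ((T ^ (p + p) : X →L[ℝ] X) : X →ₗ[ℝ] X) = LinearMap.ker ((T ^ p : X →L[ℝ] X) : X →ₗ[ℝ] X) := by
      rw [kstab (p + p) (by omega), kstab p (by omega)]
    have e2 : LinearMap.range ((T ^ (p + p) : X →L[ℝ] X) : X →ₗ[ℝ] X) = LinearMap.range ((T ^ p : X →L[ℝ] X) : X →ₗ[ℝ] X) := by
      rw [rstab (p + p) (by omega), rstab p (by omega)]
    have e3 : LinearMap.range ((T ^ (p + 1) : X →L[ℝ] X) : X →ₗ[ℝ] X) = LinearMap.range ((T ^ p : X →L[ℝ] X) : X →ₗ[ℝ] X) := by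
      rw [rstab (p + 1) (by omega), rstab p (by omega)]
    have e4 : LinearMap.ker ((T ^ (p + 1) : X →L[ℝ] X) : X →ₗ[ℝ] X) = LinearMap.ker ((T ^ p : X →L[ℝ] X) : X →ₗ[ℝ] X) := by
      rw [kstab (p + 1) (by omega), kstab p (by omega)]
    set V : Submodule ℝ X := LinearMap.ker ((T ^ p : X →L[ℝ] X) : X →ₗ[ℝ] X) with hV
    set W : Submodule ℝ X := LinearMap.range ((T ^ p : X →L[ℝ] X) : X →ₗ[ℝ] X) with hW
    have hVclosed : IsClosed (V : Set X) := ContinuousLinearMap.isClosed_ker (T ^ p)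
    -- Complementarity
    have hdisj : Disjoint V W := by
      rw [Submodule.disjoint_def]
      intro x hxV hxW
      obtain ⟨y, rfl⟩ := hxW
      have : (T ^ (p + p)) y = 0 := by
        rw [clm_pow_add_apply]; exact hxV
      have h2 : y ∈ V := by rw [← e1]; exact this
      exact h2
    have hcodisj : Codisjoint V W := by
      rw [codisjoint_iff, eq_top_iff]
      intro x _
      have hx : (T ^ p) x ∈ LinearMap.range ((T ^ (p + p) : X →L[ℝ] X) : X →ₗ[ℝ] X) := by
        rw [e2]; exact ⟨x, rfl⟩
      obtain ⟨y, hy⟩ := hx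
      simp only [ContinuousLinearMap.coe_coe] at hy
      have hv : x - (T ^ p) y ∈ V := by
        rw [hV, LinearMap.mem_ker, map_sub, ContinuousLinearMap.coe_coe, ← clm_pow_add_apply, hy, sub_self]
      have hw : (T ^ p) y ∈ W := ⟨y, rfl⟩
      have : x = (x - (T ^ p) y) + (T ^ p) y := by abel
      rw [this]
      exact Submodule.add_mem_sup hv hw
    have hcompl : IsCompl V W := ⟨hdisj, hcodisj⟩
    -- Closedness of W via the open mapping theorem
    haveI : IsClosed (V : Set X) := hVclosed
    have hle : V ≤ LinearMap.ker ((T ^ p : X →L[ℝ] X) : X →ₗ[ℝ] X) := le_refl _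
    set lL : (X ⧸ V) →ₗ[ℝ] X := V.liftQ ((T ^ p : X →L[ℝ] X) : X →ₗ[ℝ] X) hle with hlL
    have hlLcont : Continuous lL := by
      rw [← (V.isOpenQuotientMap_mkQ).continuous_comp_iff]
      exact (T ^ p).continuous
    set lC : (X ⧸ V) →L[ℝ] X := ⟨lL, hlLcont⟩ with hlC
    have hWclosed : IsClosed (W : Set X) := by
      have hr : LinearMap.range (lC : (X ⧸ V) →ₗ[ℝ] X) = W := by
        have h1 : LinearMap.range (lC : (X ⧸ V) →ₗ[ℝ] X) = LinearMap.range lL := rfl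
        rw [h1, hlL, Submodule.range_liftQ]
      have hk : LinearMap.ker (lC : (X ⧸ V) →ₗ[ℝ] X) = ⊥ := by
        have h1 : LinearMap.ker (lC : (X ⧸ V) →ₗ[ℝ] X) = LinearMap.ker lL := rfl
        rw [h1, hlL]
        exact Submodule.ker_liftQ_eq_bot _ _ _ (le_refl _)
      have hc : IsCompl (LinearMap.range (lC : (X ⧸ V) →ₗ[ℝ] X)) V := by rw [hr]; exact hcompl.symm
      have := ContinuousLinearMap.closed_complemented_range_of_isCompl_of_ker_eq_bot
        lC V hc hVclosed hk
      rwa [hr] at this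
    refine ⟨V, W, hVclosed, hWclosed, hcompl, ?_, ?_, ⟨p, fun x hx => hx⟩, ?_, ?_, ?_⟩
    · -- V is T-invariant
      intro x hx
      have : (T ^ (p + 1)) x = 0 := by
        rw [← e4] at hx; exact hx
      have h2 : (T ^ p) (T x) = 0 := by
        have := clm_pow_add_apply T p 1 x
        simp only [pow_one] at this
        rw [← this]
        exact ‹(T ^ (p + 1)) x = 0›
      exact h2
    · -- W is T-invariant
      rintro _ ⟨y, rfl⟩
      have : T ((T ^ p) y) ∈ LinearMap.range ((T ^ (p + 1) : X →L[ℝ] X) : X →ₗ[ℝ] X) := by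
        refine ⟨y, ?_⟩
        rw [show p + 1 = 1 + p from by omega, ContinuousLinearMap.coe_coe, clm_pow_add_apply, pow_one]
      rw [e3] at this
      exact this
    · -- MapsTo
      rintro _ ⟨y, rfl⟩
      have : T ((T ^ p) y) ∈ LinearMap.range ((T ^ (p + 1) : X →L[ℝ] X) : X →ₗ[ℝ] X) := by
        refine ⟨y, ?_⟩
        rw [show p + 1 = 1 + p from by omega, ContinuousLinearMap.coe_coe, clm_pow_add_apply, pow_one]
      rw [e3] at this
      exact this
    · -- InjOn
      rintro x ⟨u, rfl⟩ y ⟨v, rfl⟩ hxy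
      simp only [ContinuousLinearMap.coe_coe] at hxy
      have h1 : (T ^ (p + 1)) (u - v) = 0 := by
        rw [show p + 1 = 1 + p from by omega, clm_pow_add_apply, pow_one, map_sub, map_sub,
          hxy, sub_self]
      have h2 : u - v ∈ V := by rw [← e4]; exact h1
      have h3 : (T ^ p) u - (T ^ p) v = 0 := by rw [← map_sub]; exact h2
      exact sub_eq_zero.mp h3
    · -- SurjOn
      rintro _ ⟨y, rfl⟩
      have : (T ^ p) y ∈ LinearMap.range ((T ^ (p + 1) : X →L[ℝ] X) : X →ₗ[ℝ] X) := by rw [e3]; exact ⟨y, rfl⟩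
      obtain ⟨w, hw⟩ := this
      refine ⟨(T ^ p) w, ⟨w, rfl⟩, ?_⟩
      simp only [ContinuousLinearMap.coe_coe] at hw ⊢
      rw [← hw]
      symm
      rw [show p + 1 = 1 + p from by omega, clm_pow_add_apply, pow_one]
  · rintro ⟨V, W, _, _, hcompl, hTV, hTW, ⟨n, hn⟩, hbij⟩
    -- T^m maps W into W
    have hTWm : ∀ m : ℕ, ∀ w ∈ W, (T ^ m) w ∈ W := by
      intro m
      induction m with
      | zero => intro w hw; simpa using hw
      | succ m ih =>
        intro w hw
        rw [show m + 1 = m + 1 by rfl, clm_pow_add_apply]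
        exact ih _ (by simpa using hTW w hw)
    -- injectivity of powers of T on W
    have hinj : ∀ m : ℕ, ∀ w ∈ W, (T ^ m) w = 0 → w = 0 := by
      intro m
      induction m with
      | zero => intro w _ h; simpa using h
      | succ m ih =>
        intro w hw h
        have h1 : (T ^ m) (T w) = 0 := by
          have e := clm_pow_add_apply T m 1 w
          rw [pow_one] at e
          rw [← e, h]
        have h2 : T w = 0 := ih (T w) (hTW w hw) h1
        have : T w = T 0 := by simpa using h2
        exact hbij.injOn hw (Submodule.zero_mem W) this
    constructor
    · refine ⟨n, le_antisymm ?_ ?_⟩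
      · intro x hx
        rw [LinearMap.mem_ker] at hx ⊢
        simp only [ContinuousLinearMap.coe_coe] at hx ⊢
        rw [show n + 1 = 1 + n from by omega, clm_pow_add_apply, hx, map_zero]
      · intro x hx
        rw [LinearMap.mem_ker] at hx ⊢
        simp only [ContinuousLinearMap.coe_coe] at hx ⊢
        obtain ⟨v, w, hv, hw, rfl⟩ := Submodule.codisjoint_iff_exists_add_eq.mp hcompl.codisjoint x
        have hv1 : (T ^ (n + 1)) v = 0 := by
          rw [show n + 1 = 1 + n from by omega, clm_pow_add_apply, hn v hv, map_zero]
        have hw1 : (T ^ (n + 1)) w = 0 := by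
          have := hx
          rw [map_add, hv1, zero_add] at this
          exact this
        have : w = 0 := hinj (n + 1) w hw hw1
        rw [this, add_zero, hn v hv]
    · refine ⟨n, le_antisymm ?_ ?_⟩
      · rintro _ ⟨x, rfl⟩
        obtain ⟨v, w, hv, hw, rfl⟩ := Submodule.codisjoint_iff_exists_add_eq.mp hcompl.codisjoint x
        obtain ⟨u, hu, hu2⟩ := hbij.surjOn hw
        refine ⟨u, ?_⟩
        simp only [ContinuousLinearMap.coe_coe]
        rw [map_add, hn v hv, zero_add,
          show n + 1 = n + 1 by rfl, clm_pow_add_apply]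
        simp only [pow_one]
        rw [hu2]
      · rintro _ ⟨x, rfl⟩
        exact ⟨T x, by simp only [ContinuousLinearMap.coe_coe]; rw [show n + 1 = n + 1 by rfl, clm_pow_add_apply]; simp⟩
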